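/- Consider minimizing h(θ) = (h_1(θ) + h_2(θ))/2 with h_1(θ) = (1/2)(θ − 1)² and h_2(θ) = (1/2)(2θ + 1/2)², whose minimizer is θ* = 0. Running SSO with exact surrogate minimization (m = ∞) and step-sizes η_t = c·α_t with c ∈ (0,1] and any sequence α_t ∈ (0, 1/c] gives, when component 1 is sampled, θ_{t+1} = (1 − cα_t)θ_t + cα_t, and when component 2 is sampled, θ_{t+1} = (1 − cα_t)θ_t − (1/4)cα_t; hence with each component sampled with probability 1/2 independently at each step, the expected iterate satisfies E θ_{t+1} = (1 − cα_t) E θ_t + (3/8)cα_t, and therefore E θ_T = θ_1 ∏_{t=1}^{T−1}(1 − cα_t) + (3/8)∑_{t=1}^{T−1} cα_t ∏_{i=t+1}^{T−1}(1 − cα_i). Consequently, if θ_1 > 0, then E(θ_T − θ*) = E θ_T ≥ min(θ_1, 3/8) for every T and every such sequence (α_t); in particular SSO with exact surrogate minimization converges at best to a neighbourhood of the solution. -/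

import Mathlib

theorem stmt9 (c : ℝ) (hc0 : 0 < c) (hc1 : c ≤ 1)
    (αs : ℕ → ℝ) (hαs : ∀ t, 0 < αs t ∧ αs t ≤ 1 / c) (θ1 : ℝ) :
    -- the minimizer of h(θ) = (h₁(θ) + h₂(θ))/2 is θ* = 0
    (∀ θ : ℝ, ((1 / 2) * ((0 : ℝ) - 1) ^ 2 + (1 / 2) * (2 * 0 + 1 / 2) ^ 2) / 2 ≤
      ((1 / 2) * (θ - 1) ^ 2 + (1 / 2) * (2 * θ + 1 / 2) ^ 2) / 2) ∧
    (∀ t : ℕ, ∀ θt : ℝ,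
      -- sampling component 1: exact surrogate minimization gives (1 - cα_t)θ_t + cα_t
      (∀ θ' : ℝ,
        (1 / 2) * (θt - 1) ^ 2 +
            (θt - 1) * (((1 - c * αs t) * θt + c * αs t) - θt) +
            (1 / (2 * (c * αs t))) * (((1 - c * αs t) * θt + c * αs t) - θt) ^ 2 ≤
          (1 / 2) * (θt - 1) ^ 2 + (θt - 1) * (θ' - θt) +
            (1 / (2 * (c * αs t))) * (θ' - θt) ^ 2) ∧
      -- sampling component 2: exact surrogate minimization gives (1 - cα_t)θ_t - (1/4)cα_t
      (∀ θ' : ℝ,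
        (1 / 2) * (2 * θt + 1 / 2) ^ 2 +
            (2 * θt + 1 / 2) * (2 * ((1 - c * αs t) * θt - (1 / 4) * (c * αs t)) - 2 * θt) +
            (1 / (2 * (c * αs t))) *
              (2 * ((1 - c * αs t) * θt - (1 / 4) * (c * αs t)) - 2 * θt) ^ 2 ≤
          (1 / 2) * (2 * θt + 1 / 2) ^ 2 + (2 * θt + 1 / 2) * (2 * θ' - 2 * θt) +
            (1 / (2 * (c * αs t))) * (2 * θ' - 2 * θt) ^ 2) ∧
      -- each component sampled with probability 1/2: expected next iterate
      (((1 - c * αs t) * θt + c * αs t) +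
          ((1 - c * αs t) * θt - (1 / 4) * (c * αs t))) / 2 =
        (1 - c * αs t) * θt + (3 / 8) * (c * αs t)) ∧
    (∀ Eθ : ℕ → ℝ, Eθ 1 = θ1 →
      (∀ t, 1 ≤ t → Eθ (t + 1) = (1 - c * αs t) * Eθ t + (3 / 8) * (c * αs t)) →
      ∀ T, 1 ≤ T →
        Eθ T = θ1 * (∏ t ∈ Finset.Icc 1 (T - 1), (1 - c * αs t)) +
            (3 / 8) * ∑ t ∈ Finset.Icc 1 (T - 1),
              c * αs t * ∏ i ∈ Finset.Icc (t + 1) (T - 1), (1 - c * αs i) ∧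
          (0 < θ1 → min θ1 (3 / 8) ≤ Eθ T)) := by
  have hη : ∀ t, 0 < c * αs t := fun t => mul_pos hc0 (hαs t).1
  have hη1 : ∀ t, c * αs t ≤ 1 := by
    intro t
    have h := mul_le_mul_of_nonneg_left (hαs t).2 hc0.le
    rwa [mul_one_div, div_self hc0.ne'] at h
  refine ⟨?_, ?_, ?_⟩
  · intro θ
    nlinarith [sq_nonneg θ]
  · intro t θt
    have h1 := hη t
    refine ⟨?_, ?_, by ring⟩
    · intro θ'
      have key : ((1 / 2) * (θt - 1) ^ 2 + (θt - 1) * (θ' - θt) +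
            (1 / (2 * (c * αs t))) * (θ' - θt) ^ 2) -
          ((1 / 2) * (θt - 1) ^ 2 +
            (θt - 1) * (((1 - c * αs t) * θt + c * αs t) - θt) +
            (1 / (2 * (c * αs t))) * (((1 - c * αs t) * θt + c * αs t) - θt) ^ 2) =
          (1 / (2 * (c * αs t))) * (θ' - ((1 - c * αs t) * θt + c * αs t)) ^ 2 := by
        field_simp [(hαs t).1.ne', hc0.ne']
        ring
      have nn : 0 ≤ (1 / (2 * (c * αs t))) * (θ' - ((1 - c * αs t) * θt + c * αs t)) ^ 2 := by
        positivity
      linarith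
    · intro θ'
      have key : ((1 / 2) * (2 * θt + 1 / 2) ^ 2 + (2 * θt + 1 / 2) * (2 * θ' - 2 * θt) +
            (1 / (2 * (c * αs t))) * (2 * θ' - 2 * θt) ^ 2) -
          ((1 / 2) * (2 * θt + 1 / 2) ^ 2 +
            (2 * θt + 1 / 2) * (2 * ((1 - c * αs t) * θt - (1 / 4) * (c * αs t)) - 2 * θt) +
            (1 / (2 * (c * αs t))) *
              (2 * ((1 - c * αs t) * θt - (1 / 4) * (c * αs t)) - 2 * θt) ^ 2) =
          (1 / (2 * (c * αs t))) *
            (2 * θ' - 2 * ((1 - c * αs t) * θt - (1 / 4) * (c * αs t))) ^ 2 := by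
        field_simp [(hαs t).1.ne', hc0.ne']
        ring
      have nn : 0 ≤ (1 / (2 * (c * αs t))) *
          (2 * θ' - 2 * ((1 - c * αs t) * θt - (1 / 4) * (c * αs t))) ^ 2 := by
        positivity
      linarith
  · intro Eθ hE1 hrec T hT
    constructor
    · induction T, hT using Nat.le_induction with
      | base => simp [hE1]
      | succ T hT ih =>
        obtain ⟨S, rfl⟩ : ∃ S, T = S + 1 := ⟨T - 1, (Nat.succ_pred_eq_of_pos hT).symm⟩
        rw [hrec (S + 1) hT, ih]
        simp only [Nat.add_sub_cancel]
        rw [Finset.prod_Icc_succ_top (by omega : 1 ≤ S + 1),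
            Finset.sum_Icc_succ_top (by omega : 1 ≤ S + 1)]
        have hsum : ∑ t ∈ Finset.Icc 1 S,
            c * αs t * ∏ i ∈ Finset.Icc (t + 1) (S + 1), (1 - c * αs i) =
            (∑ t ∈ Finset.Icc 1 S,
              c * αs t * ∏ i ∈ Finset.Icc (t + 1) S, (1 - c * αs i)) * (1 - c * αs (S + 1)) := by
          rw [Finset.sum_mul]
          refine Finset.sum_congr rfl ?_
          intro t ht
          have htS : t + 1 ≤ S + 1 := by
            have := (Finset.mem_Icc.mp ht).2; omega
          rw [Finset.prod_Icc_succ_top htS]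
          ring
        rw [hsum]
        have : Finset.Icc (S + 1 + 1) (S + 1) = ∅ := by
          rw [Finset.Icc_eq_empty]; omega
        rw [this, Finset.prod_empty]
        ring
    · intro hθ1
      induction T, hT using Nat.le_induction with
      | base =>
        rw [hE1]
        exact min_le_left _ _
      | succ T hT ih =>
        rw [hrec T hT]
        have h1 := hη T
        have h2 := hη1 T
        have h3 : min θ1 (3 / 8 : ℝ) ≤ 3 / 8 := min_le_right _ _
        nlinarith [ih]
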